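/- Menon's identity: For every positive integer n, the sum over a from 1 to n with gcd(a,n)=1 of gcd(a-1,n) equals φ(n)·τ(n), where φ is Euler's totient and τ is the number-of-divisors function. -/

import Mathlib

open Finset

lemma menon_ker_card (n d : ℕ) (hn : 1 < n) (hd : d ∣ n) :
    ((Finset.Icc 1 n).filter (fun a => Nat.gcd a n = 1 ∧ d ∣ a - 1)).card * d.totient
      = n.totient := by
  haveI : NeZero n := ⟨by omega⟩
  haveI : NeZero d := ⟨fun h => by subst h; simp at hd; omega⟩
  haveI : Fact (1 < n) := ⟨hn⟩
  set f := ZMod.unitsMap hd with hf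
  have hcount : ((Finset.Icc 1 n).filter (fun a => Nat.gcd a n = 1 ∧ d ∣ a - 1)).card
      = ((Finset.univ : Finset (ZMod n)ˣ).filter (fun u => f u = 1)).card := by
    apply Finset.card_bij (fun a ha => ZMod.unitOfCoprime a (by
      simp only [Finset.mem_filter] at ha; exact ha.2.1))
    · intro a ha
      simp only [Finset.mem_filter, Finset.mem_Icc] at ha ⊢
      refine ⟨Finset.mem_univ _, ?_⟩
      have h1 : (a : ZMod d) = ((1 : ℕ) : ZMod d) := by
        rw [ZMod.natCast_eq_natCast_iff]
        exact ((Nat.modEq_iff_dvd' ha.1.1).mpr ha.2.2).symm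
      ext
      rw [hf, ZMod.unitsMap_def]
      simp only [Units.coe_map, MonoidHom.coe_coe, ZMod.coe_unitOfCoprime,
        Units.val_one]
      rw [map_natCast]
      simpa using h1
    · intro a ha b hb hab
      simp only [Finset.mem_filter, Finset.mem_Icc] at ha hb
      have : (a : ZMod n) = (b : ZMod n) := by
        have := congrArg (Units.val) hab
        simpa [ZMod.coe_unitOfCoprime] using this
      rw [ZMod.natCast_eq_natCast_iff] at this
      have hmod : a % n = b % n := this
      rcases lt_or_eq_of_le ha.1.2 with h1 | h1
      · rcases lt_or_eq_of_le hb.1.2 with h2 | h2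
        · rwa [Nat.mod_eq_of_lt h1, Nat.mod_eq_of_lt h2] at hmod
        · subst h2
          rw [Nat.mod_eq_of_lt h1, Nat.mod_self] at hmod
          omega
      · subst h1
        rcases lt_or_eq_of_le hb.1.2 with h2 | h2
        · rw [Nat.mod_self, Nat.mod_eq_of_lt h2] at hmod
          omega
        · omega
    · intro u hu
      simp only [Finset.mem_filter, Finset.mem_univ, true_and] at hu
      refine ⟨(u : ZMod n).val, ?_, ?_⟩
      · have hcop := ZMod.val_coe_unit_coprime u
        have hval : (u : ZMod n).val < n := ZMod.val_lt _
        have hpos : 0 < (u : ZMod n).val := by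
          refine Nat.pos_of_ne_zero fun h => Units.ne_zero u ?_
          exact (ZMod.val_eq_zero _).mp h
        refine Finset.mem_filter.mpr ⟨Finset.mem_Icc.mpr ⟨hpos, le_of_lt hval⟩, hcop, ?_⟩
        have hcast : (((u : ZMod n).val : ℕ) : ZMod n) = (u : ZMod n) :=
          ZMod.natCast_rightInverse _
        have h1 : (((u : ZMod n).val : ℕ) : ZMod d) = ((1 : ℕ) : ZMod d) := by
          have hthis := congrArg Units.val hu
          rw [hf, ZMod.unitsMap_def] at hthis
          simp only [Units.coe_map, MonoidHom.coe_coe, Units.val_one] at hthis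
          calc (((u : ZMod n).val : ℕ) : ZMod d)
              = ZMod.castHom hd (ZMod d) (((u : ZMod n).val : ℕ) : ZMod n) :=
                (map_natCast _ _).symm
            _ = ZMod.castHom hd (ZMod d) (u : ZMod n) := by rw [hcast]
            _ = ((1 : ℕ) : ZMod d) := by rw [hthis]; simp
        rw [ZMod.natCast_eq_natCast_iff] at h1
        exact (Nat.modEq_iff_dvd' hpos).mp h1.symm
      · ext
        simp [ZMod.coe_unitOfCoprime, ZMod.natCast_rightInverse _]
  rw [hcount]
  have hker : ((Finset.univ : Finset (ZMod n)ˣ).filter (fun u => f u = 1)).card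
      = Nat.card f.ker := by
    rw [Nat.card_eq_fintype_card, Fintype.card_subtype]
    congr 1
    ext u
    simp [MonoidHom.mem_ker]
  have hmain : Nat.card (ZMod n)ˣ = Nat.card (ZMod d)ˣ * Nat.card f.ker := by
    rw [Subgroup.card_eq_card_quotient_mul_card_subgroup f.ker]
    congr 1
    exact Nat.card_congr
      (QuotientGroup.quotientKerEquivOfSurjective f (ZMod.unitsMap_surjective hd)).toEquiv
  have h1 : Nat.card (ZMod n)ˣ = n.totient := by
    rw [Nat.card_eq_fintype_card, ZMod.card_units_eq_totient]
  have h2 : Nat.card (ZMod d)ˣ = d.totient := by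
    rw [Nat.card_eq_fintype_card, ZMod.card_units_eq_totient]
  rw [h1, h2] at hmain
  rw [hker, hmain]
  ring

theorem menon_identity (n : ℕ) (hn : 0 < n) :
    ∑ a ∈ (Finset.Icc 1 n).filter (fun a => Nat.gcd a n = 1), Nat.gcd (a - 1) n
      = n.totient * n.divisors.card := by
  rcases eq_or_lt_of_le (show 1 ≤ n from hn) with h1 | h1
  · simp [← h1]
  · -- n ≥ 2
    have key : ∀ a ∈ (Finset.Icc 1 n).filter (fun a => Nat.gcd a n = 1),
        Nat.gcd (a - 1) n = ∑ d ∈ n.divisors, if d ∣ a - 1 then d.totient else 0 := by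
      intro a ha
      have hg : Nat.gcd (a - 1) n ≠ 0 := by
        have := Nat.gcd_dvd_right (a - 1) n
        intro h; rw [h] at this; omega
      rw [← Nat.sum_totient (Nat.gcd (a - 1) n)]
      rw [← Finset.sum_filter]
      apply Finset.sum_congr _ (fun _ _ => rfl)
      ext d
      simp only [Nat.mem_divisors, Finset.mem_filter, Nat.dvd_gcd_iff]
      constructor
      · rintro ⟨⟨h1, h2⟩, _⟩
        exact ⟨⟨h2, by omega⟩, h1⟩
      · rintro ⟨⟨h2, _⟩, h1⟩
        exact ⟨⟨h1, h2⟩, hg⟩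
    rw [Finset.sum_congr rfl key, Finset.sum_comm]
    have step : ∀ d ∈ n.divisors,
        ∑ a ∈ (Finset.Icc 1 n).filter (fun a => Nat.gcd a n = 1),
          (if d ∣ a - 1 then d.totient else 0) = n.totient := by
      intro d hd
      rw [Nat.mem_divisors] at hd
      rw [← Finset.sum_filter, Finset.sum_const, smul_eq_mul,
        Finset.filter_filter]
      exact menon_ker_card n d h1 hd.1
    rw [Finset.sum_congr rfl step, Finset.sum_const, smul_eq_mul, mul_comm]
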